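/- arXiv:0809.3643 — 6 statements merged into one kernel-verified Lean document; each statement's English description precedes it below -/
import Mathlib

section
/- If a compact body K in Euclidean space E^n is such that every point of its boundary lies in a supporting hyperplane half-space (i.e., K lies on one side of a hyperplane through each boundary point), and K is connected with nonempty interior, then K is convex. -/
open scoped RealInnerProductSpace

/-- A connected compact body in `E^n`, every frontier point of which lies in a supporting
hyperplane (so that `K` lies in one of the closed half-spaces it bounds), is convex. -/
theorem stmt_0 (n : ℕ) (K : Set (EuclideanSpace ℝ (Fin n)))
    (hcomp : IsCompact K) (hbody : K = closure (interior K))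
    (hint : (interior K).Nonempty) (hconn : IsConnected K)
    (hsupp : ∀ x ∈ frontier K, ∃ v : EuclideanSpace ℝ (Fin n), v ≠ 0 ∧
      ∀ y ∈ K, ⟪v, y⟫ ≤ ⟪v, x⟫) :
    Convex ℝ K := by
  have hKcl : IsClosed K := hcomp.isClosed
  intro x hx y hy α β hα hβ hαβ
  by_contra hp
  set p : EuclideanSpace ℝ (Fin n) := α • x + β • y with hpdef
  obtain ⟨a, ha⟩ := hint
  have haK : a ∈ K := interior_subset ha
  -- the segment map
  set g : ℝ → EuclideanSpace ℝ (Fin n) := fun t => a + t • (p - a) with hgdef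
  have hgcont : Continuous g := by
    apply continuous_const.add (continuous_id.smul continuous_const)
  have hg0 : g 0 = a := by simp [hgdef]
  have hg1 : g 1 = p := by simp [hgdef]
  set S : Set ℝ := Set.Icc (0:ℝ) 1 ∩ g ⁻¹' K with hSdef
  have hScomp : IsCompact S :=
    (isCompact_Icc).inter_right (hKcl.preimage hgcont)
  have hSne : S.Nonempty := ⟨0, ⟨le_refl 0, zero_le_one⟩, by simp [hg0, haK]⟩
  set T : ℝ := sSup S with hTdef
  have hTS : T ∈ S := hScomp.sSup_mem hSne
  obtain ⟨⟨hT0, hT1⟩, hTK⟩ := hTS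
  have hTub : ∀ t ∈ S, t ≤ T := fun t ht => le_csSup hScomp.bddAbove ht
  set z : EuclideanSpace ℝ (Fin n) := g T with hzdef
  have hzK : z ∈ K := hTK
  have hT1' : T < 1 := by
    rcases lt_or_eq_of_le hT1 with h | h
    · exact h
    · exfalso; apply hp; rw [← hg1, ← h]; exact hTK
  -- z is on the frontier
  have hzfr : z ∈ frontier K := by
    rw [hKcl.frontier_eq]
    refine ⟨hzK, fun hzint => ?_⟩
    have hzn : K ∈ nhds z := mem_interior_iff_mem_nhds.mp hzint
    have : g ⁻¹' K ∈ nhds T := hgcont.continuousAt.preimage_mem_nhds hzn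
    obtain ⟨ε, hε, hball⟩ := Metric.mem_nhds_iff.mp this
    set t' : ℝ := min (T + ε / 2) ((T + 1) / 2) with ht'def
    have ht'T : T < t' := by
      apply lt_min <;> linarith
    have ht'1 : t' ≤ 1 := by
      have : (T + 1) / 2 ≤ 1 := by linarith
      exact le_trans (min_le_right _ _) this
    have ht'ball : t' ∈ Metric.ball T ε := by
      rw [Metric.mem_ball, Real.dist_eq, abs_lt]
      constructor
      · linarith
      · have : t' ≤ T + ε / 2 := min_le_left _ _
        linarith
    have ht'S : t' ∈ S := ⟨⟨by linarith, ht'1⟩, hball ht'ball⟩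
    exact absurd (hTub t' ht'S) (not_le.mpr ht'T)
  obtain ⟨v, hv0, hvsupp⟩ := hsupp z hzfr
  -- interior point gives strict inequality
  obtain ⟨ε, hε, hball⟩ := Metric.isOpen_iff.mp isOpen_interior a ha
  have hvnorm : (0:ℝ) < ‖v‖ := norm_pos_iff.mpr hv0
  set δ : ℝ := ε / (2 * ‖v‖) with hδdef
  have hδpos : 0 < δ := by positivity
  have hw : a + δ • v ∈ K := by
    apply interior_subset; apply hball
    rw [Metric.mem_ball, dist_eq_norm]
    have : a + δ • v - a = δ • v := by abel
    rw [this, norm_smul, Real.norm_eq_abs, abs_of_pos hδpos, hδdef]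
    have he : ε / (2 * ‖v‖) * ‖v‖ = ε / 2 := by
      field_simp
    linarith
  have hstrict : ⟪v, a⟫ < ⟪v, z⟫ := by
    have h1 := hvsupp _ hw
    have h2 : ⟪v, a + δ • v⟫ = ⟪v, a⟫ + δ * ‖v‖ ^ 2 := by
      rw [inner_add_right, real_inner_smul_right, real_inner_self_eq_norm_sq]
    nlinarith [mul_pos hδpos (pow_pos hvnorm 2)]
  -- inner products along the segment
  have hinz : ⟪v, z⟫ = ⟪v, a⟫ + T * (⟪v, p⟫ - ⟪v, a⟫) := by
    rw [hzdef, hgdef]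
    simp only [inner_add_right, real_inner_smul_right, inner_sub_right]
  have hinp : ⟪v, p⟫ = α * ⟪v, x⟫ + β * ⟪v, y⟫ := by
    rw [hpdef, inner_add_right, real_inner_smul_right, real_inner_smul_right]
  have hxle : ⟪v, x⟫ ≤ ⟪v, z⟫ := hvsupp x hx
  have hyle : ⟪v, y⟫ ≤ ⟪v, z⟫ := hvsupp y hy
  have hple : ⟪v, p⟫ ≤ ⟪v, z⟫ := by
    rw [hinp]
    calc α * ⟪v, x⟫ + β * ⟪v, y⟫ ≤ α * ⟪v, z⟫ + β * ⟪v, z⟫ := by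
          apply add_le_add (mul_le_mul_of_nonneg_left hxle hα)
            (mul_le_mul_of_nonneg_left hyle hβ)
      _ = ⟪v, z⟫ := by rw [← add_mul, hαβ, one_mul]
  nlinarith [mul_nonneg hT0 (sub_nonneg.mpr hple),
    mul_pos (sub_pos.mpr hstrict) (sub_pos.mpr hT1')]
end

section
/- The class K^k_2 is contained in the class K^k_1. Precisely: let K be a compact set in E^n with the property that for every point x not in K there exists a k-dimensional affine subspace P containing x such that P bounds a closed half-(k+1)-plane disjoint from K. Then for every point x in the frontier of K there exists a k-dimensional affine subspace through x whose associated closed half-(k+1)-plane is supporting K (meets frontier K and is disjoint from the interior of K). -/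
open Filter Topology Metric RealInnerProductSpace


/-- The closed half-`(k+1)`-plane determined by an affine subspace `P` and a vector `v`
orthogonal to the direction of `P`. -/
def halfPlane {n : ℕ} (P : AffineSubspace ℝ (EuclideanSpace ℝ (Fin n)))
    (v : EuclideanSpace ℝ (Fin n)) : Set (EuclideanSpace ℝ (Fin n)) :=
  {z | ∃ p ∈ P, ∃ t : ℝ, 0 ≤ t ∧ z = p + t • v}

lemma exists_orthonormal_span {n k : ℕ} (D : Submodule ℝ (EuclideanSpace ℝ (Fin n)))
    (h : Module.finrank ℝ D = k) :
    ∃ e : Fin k → EuclideanSpace ℝ (Fin n), Orthonormal ℝ e ∧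
      Submodule.span ℝ (Set.range e) = D := by
  let b := (stdOrthonormalBasis ℝ D).reindex (finCongr h)
  refine ⟨fun j => (b j : _), ?_, ?_⟩
  · exact b.orthonormal.comp_linearIsometry D.subtypeₗᵢ
  · have : Set.range (fun j => (b j : EuclideanSpace ℝ (Fin n))) =
        D.subtype '' Set.range b := by
      ext z; simp [Set.range_comp]
    rw [this, ← Submodule.map_span, show Submodule.span ℝ (Set.range ⇑b) = ⊤ from b.toBasis.span_eq ▸ (by rw [OrthonormalBasis.coe_toBasis]), Submodule.map_top,
      Submodule.range_subtype]

/-- The class `K^k_2` is contained in the class `K^k_1`: if every point outside a compact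
set `K` lies on a `k`-plane bounding a half-`(k+1)`-plane disjoint from `K`, then every
frontier point of `K` lies on a `k`-plane bounding a half-`(k+1)`-plane supporting `K`
(meeting the frontier and disjoint from the interior). -/
theorem stmt_2 (n k : ℕ) (K : Set (EuclideanSpace ℝ (Fin n))) (hK : IsCompact K)
    (h2 : ∀ x ∉ K, ∃ P : AffineSubspace ℝ (EuclideanSpace ℝ (Fin n)),
      ∃ v : EuclideanSpace ℝ (Fin n), x ∈ P ∧ Module.finrank ℝ P.direction = k ∧
        ‖v‖ = 1 ∧ v ∈ P.directionᗮ ∧ Disjoint (halfPlane P v) K) :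
    ∀ x ∈ frontier K, ∃ P : AffineSubspace ℝ (EuclideanSpace ℝ (Fin n)),
      ∃ v : EuclideanSpace ℝ (Fin n), x ∈ P ∧ Module.finrank ℝ P.direction = k ∧
        ‖v‖ = 1 ∧ v ∈ P.directionᗮ ∧ (halfPlane P v ∩ frontier K).Nonempty ∧
        Disjoint (halfPlane P v) (interior K) := by
  intro x hx
  classical
  have hxK : x ∈ closure Kᶜ := by
    rw [frontier_eq_closure_inter_closure] at hx; exact hx.2
  obtain ⟨y, hyK, hy'⟩ := mem_closure_iff_seq_limit.mp hxK
  choose P v hyP hdim hnorm horth hdisj using fun i => h2 (y i) (hyK i)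
  choose e he_on he_span using fun i =>
    exists_orthonormal_span ((P i).direction) (hdim i)
  -- bound the data
  obtain ⟨C, hC⟩ := (hy'.isCompact_insert_range.isBounded).subset_closedBall 0
  set F : ℕ → (EuclideanSpace ℝ (Fin n)) × (Fin k → EuclideanSpace ℝ (Fin n)) ×
      EuclideanSpace ℝ (Fin n) := fun i => (y i, e i, v i) with hF
  have hFmem : ∀ i, F i ∈ Metric.closedBall (0 : (EuclideanSpace ℝ (Fin n)) ×
      (Fin k → EuclideanSpace ℝ (Fin n)) × EuclideanSpace ℝ (Fin n)) (max C 1) := by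
    intro i
    rw [Metric.mem_closedBall, dist_zero_right]
    have h1 : ‖y i‖ ≤ C := by
      have := hC (Set.mem_insert_of_mem _ (Set.mem_range_self i))
      rwa [Metric.mem_closedBall, dist_zero_right] at this
    have h2 : ‖e i‖ ≤ 1 := by
      apply pi_norm_le_iff_of_nonneg zero_le_one |>.2
      intro j
      exact le_of_eq ((he_on i).1 j)
    have h3 : ‖v i‖ ≤ 1 := le_of_eq (hnorm i)
    calc ‖F i‖ = max ‖y i‖ (max ‖e i‖ ‖v i‖) := by rfl
    _ ≤ max C 1 := by
      apply max_le_max h1 (by simpa using max_le h2 h3)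
  obtain ⟨L, _, φ, hφ, hlim⟩ :=
    (isCompact_closedBall _ (max C 1)).tendsto_subseq hFmem
  obtain ⟨x', e', v'⟩ := L
  have hylim : Tendsto (fun i => y (φ i)) atTop (𝓝 x') :=
    (continuous_fst.tendsto _).comp hlim
  have hx' : x' = x :=
    tendsto_nhds_unique hylim (hy'.comp hφ.tendsto_atTop)
  subst hx'
  have helim : ∀ j, Tendsto (fun i => e (φ i) j) atTop (𝓝 (e' j)) := fun j =>
    ((continuous_apply j).comp (continuous_fst.comp continuous_snd)).tendsto _ |>.comp hlim
  have hvlim : Tendsto (fun i => v (φ i)) atTop (𝓝 v') :=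
    (continuous_snd.comp continuous_snd).tendsto _ |>.comp hlim
  -- limit data is orthonormal
  have he'on : Orthonormal ℝ e' := by
    rw [orthonormal_iff_ite]
    intro j l
    refine tendsto_nhds_unique (l := atTop) (f := fun i => ⟪e (φ i) j, e (φ i) l⟫) ?_ ?_
    · exact (helim j).inner (helim l)
    · have : ∀ i, ⟪e (φ i) j, e (φ i) l⟫ = if j = l then (1:ℝ) else 0 := fun i =>
        orthonormal_iff_ite.1 (he_on (φ i)) j l
      simp only [this]; exact tendsto_const_nhds
  have hv'norm : ‖v'‖ = 1 := by
    have h1 : Tendsto (fun i => ‖v (φ i)‖) atTop (𝓝 ‖v'‖) := hvlim.norm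
    have h2 : (fun i => ‖v (φ i)‖) = fun _ => (1:ℝ) := funext fun i => hnorm (φ i)
    rw [h2] at h1
    exact tendsto_nhds_unique h1 tendsto_const_nhds
  have hv'orth : ∀ j, ⟪e' j, v'⟫ = 0 := by
    intro j
    refine tendsto_nhds_unique (l := atTop) (f := fun i => ⟪e (φ i) j, v (φ i)⟫) ?_ ?_
    · exact (helim j).inner hvlim
    · have : ∀ i, ⟪e (φ i) j, v (φ i)⟫ = 0 := by
        intro i
        have hj : e (φ i) j ∈ (P (φ i)).direction := by
          rw [← he_span (φ i)]
          exact Submodule.subset_span (Set.mem_range_self j)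
        exact (Submodule.mem_orthogonal _ _).1 (horth (φ i)) _ hj
      simp only [this]; exact tendsto_const_nhds
  set D : Submodule ℝ (EuclideanSpace ℝ (Fin n)) := Submodule.span ℝ (Set.range e') with hD
  refine ⟨AffineSubspace.mk' x' D, v', AffineSubspace.self_mem_mk' x' D, ?_, hv'norm, ?_, ?_, ?_⟩
  · rw [AffineSubspace.direction_mk']
    rw [finrank_span_eq_card he'on.linearIndependent]
    simp
  · rw [AffineSubspace.direction_mk', Submodule.mem_orthogonal]
    intro u hu
    induction hu using Submodule.span_induction with
    | mem u hu => obtain ⟨j, rfl⟩ := hu; exact hv'orth j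
    | zero => simp
    | add u w _ _ hu hw => simp [inner_add_left, hu, hw]
    | smul c u _ hu => simp [inner_smul_left, hu]
  · exact ⟨x', ⟨x', AffineSubspace.self_mem_mk' x' D, 0, le_refl 0, by simp⟩, hx⟩
  · rw [Set.disjoint_left]
    rintro z ⟨p, hp, t, ht, rfl⟩ hzint
    have hpd : p - x' ∈ D := by
      have := AffineSubspace.mem_mk'.1 hp
      simpa using this
    obtain ⟨c, hc⟩ := (Submodule.mem_span_range_iff_exists_fun ℝ).1 hpd
    set g : ℕ → EuclideanSpace ℝ (Fin n) := fun i =>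
      (y (φ i) + ∑ j, c j • e (φ i) j) + t • v (φ i) with hg
    have hgK : ∀ i, g i ∉ K := by
      intro i hgi
      refine Set.disjoint_left.1 (hdisj (φ i)) ?_ hgi
      refine ⟨y (φ i) + ∑ j, c j • e (φ i) j, ?_, t, ht, rfl⟩
      have hd : (∑ j, c j • e (φ i) j) ∈ (P (φ i)).direction := by
        rw [← he_span (φ i)]
        exact Submodule.sum_mem _ fun j _ =>
          Submodule.smul_mem _ _ (Submodule.subset_span (Set.mem_range_self j))
      have := AffineSubspace.vadd_mem_of_mem_direction hd (hyP (φ i))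
      simpa [add_comm] using this
    have hglim : Tendsto g atTop (𝓝 (p + t • v')) := by
      have h1 : Tendsto (fun i => ∑ j, c j • e (φ i) j) atTop
          (𝓝 (∑ j, c j • e' j)) :=
        tendsto_finset_sum _ fun j _ => (helim j).const_smul (c j)
      have := (hylim.add h1).add (hvlim.const_smul t)
      rw [hc] at this
      convert this using 2
      abel
    have : ∀ᶠ i in atTop, g i ∈ interior K :=
      hglim.eventually (isOpen_interior.eventually_mem hzint)
    obtain ⟨i, hi⟩ := this.exists
    exact hgK i (interior_subset hi)
end

section
/- Let K be a compact set in E^n with the property that every point x ∉ K lies on a k-dimensional affine subspace disjoint from K (class K^k_2). Then the visual hull of K with respect to the family of all orthogonal projections onto (n-k)-dimensional linear subspaces equals K; that is, the set of points x ∈ E^n such that for every (n-k)-dimensional linear subspace P, the orthogonal projection of x onto P lies in the orthogonal projection of K onto P, is exactly K. -/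
/-- If every point outside the compact set `K` lies on a `k`-dimensional affine subspace
disjoint from `K` (class `K^k_2`), then the visual hull of `K` with respect to all
orthogonal projections onto `(n-k)`-dimensional subspaces equals `K`. -/
theorem stmt_4 (n k : ℕ) (K : Set (EuclideanSpace ℝ (Fin n))) (hK : IsCompact K)
    (h2 : ∀ x ∉ K, ∃ P : AffineSubspace ℝ (EuclideanSpace ℝ (Fin n)), x ∈ P ∧
      Module.finrank ℝ P.direction = k ∧ ∀ y ∈ P, y ∉ K) :
    {x : EuclideanSpace ℝ (Fin n) |
      ∀ P : Submodule ℝ (EuclideanSpace ℝ (Fin n)), Module.finrank ℝ P = n - k →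
        (P.orthogonalProjectionOnto x : EuclideanSpace ℝ (Fin n)) ∈
          (fun y => (P.orthogonalProjectionOnto y : EuclideanSpace ℝ (Fin n))) '' K} = K := by
  ext x
  simp only [Set.mem_setOf_eq]
  constructor
  · intro hx
    by_contra hxK
    obtain ⟨P, hxP, hdim, hPK⟩ := h2 x hxK
    set Q : Submodule ℝ (EuclideanSpace ℝ (Fin n)) := P.directionᗮ with hQdef
    have hsum := Submodule.finrank_add_finrank_orthogonal (K := P.direction)
    have hn : Module.finrank ℝ (EuclideanSpace ℝ (Fin n)) = n := by
      simp [finrank_euclideanSpace]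
    have hQ : Module.finrank ℝ Q = n - k := by
      rw [hQdef]
      omega
    obtain ⟨y, hyK, hproj⟩ := hx Q hQ
    have hxo : x - (Q.orthogonalProjectionOnto x : EuclideanSpace ℝ (Fin n)) ∈ Qᗮ :=
      Q.sub_starProjection_mem_orthogonal x
    have hyo : y - (Q.orthogonalProjectionOnto y : EuclideanSpace ℝ (Fin n)) ∈ Qᗮ :=
      Q.sub_starProjection_mem_orthogonal y
    have hxy : y - x ∈ Qᗮ := by
      have hproj' : (Q.orthogonalProjectionOnto y : EuclideanSpace ℝ (Fin n)) =
          Q.orthogonalProjectionOnto x := hproj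
      have := Qᗮ.sub_mem hyo hxo
      rw [hproj'] at this
      have h : y - ↑(Q.orthogonalProjectionOnto x) - (x - ↑(Q.orthogonalProjectionOnto x)) = y - x := by
        abel
      rwa [h] at this
    have hQQ : Qᗮ = P.direction := Submodule.orthogonal_orthogonal _
    rw [hQQ] at hxy
    have hyP : y ∈ P := by
      have := AffineSubspace.vadd_mem_of_mem_direction hxy hxP
      simpa [vadd_eq_add, sub_add_cancel] using this
    exact hPK y hyP hyK
  · intro hx P hP
    exact ⟨x, hx, rfl⟩
end

section
/- Inclusion K^{k,ε}_2 ⊆ K^{k,ε}_1: let K be a compact body in E^n such that every point x ∉ K with dist(x, K) ≤ 1/ε lies on a k-sphere S^k(C, 1/ε) (boundary of a (k+1)-dimensional ball of radius 1/ε, with dist(C, K) ≤ 1/ε) disjoint from K. Then every point x in the frontier of K lies on a k-sphere S^k(C, 1/ε) that is disjoint from the interior of K (a supporting sphere of radius 1/ε). -/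
open Metric Filter Bornology Submodule Topology

private lemma aux_norm_sum_eq {F : Type*} [NormedAddCommGroup F] [InnerProductSpace ℝ F]
    {ι : Type*} [Fintype ι] {v w : ι → F} (hv : Orthonormal ℝ v)
    (hw : Orthonormal ℝ w) (a : ι → ℝ) : ‖∑ i, a i • v i‖ = ‖∑ i, a i • w i‖ := by
  have h1 := hv.inner_sum a a Finset.univ
  have h2 := hw.inner_sum a a Finset.univ
  rw [real_inner_self_eq_norm_sq] at h1 h2
  nlinarith [norm_nonneg (∑ i, a i • v i), norm_nonneg (∑ i, a i • w i)]

/-- Inclusion `K^{k,ε}_2 ⊆ K^{k,ε}_1`: if every point `x ∉ K` with `dist(x,K) ≤ 1/ε` lies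
on a `k`-sphere of radius `1/ε` (with center `C` satisfying `dist(C,K) ≤ 1/ε`) disjoint
from `K`, then every frontier point of `K` lies on a `k`-sphere of radius `1/ε` disjoint
from the interior of `K` (a supporting sphere). -/
theorem stmt_11 (n k : ℕ) (ε : ℝ) (hε : 0 < ε) (K : Set (EuclideanSpace ℝ (Fin n)))
    (hcomp : IsCompact K) (hbody : K = closure (interior K)) (hint : (interior K).Nonempty)
    (h2 : ∀ x ∉ K, Metric.infDist x K ≤ 1 / ε →
      ∃ C : EuclideanSpace ℝ (Fin n), Metric.infDist C K ≤ 1 / ε ∧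
        ∃ A : AffineSubspace ℝ (EuclideanSpace ℝ (Fin n)),
          C ∈ A ∧ x ∈ A ∧ Module.finrank ℝ A.direction = k + 1 ∧ dist x C = 1 / ε ∧
          ∀ y ∈ A, dist y C = 1 / ε → y ∉ K) :
    ∀ x ∈ frontier K,
      ∃ C : EuclideanSpace ℝ (Fin n), ∃ A : AffineSubspace ℝ (EuclideanSpace ℝ (Fin n)),
        C ∈ A ∧ x ∈ A ∧ Module.finrank ℝ A.direction = k + 1 ∧ dist x C = 1 / ε ∧
        ∀ y ∈ A, dist y C = 1 / ε → y ∉ interior K := by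
  intro x hx
  have hKclosed : IsClosed K := hcomp.isClosed
  have hxK : x ∈ K := by
    have := hx.1
    rwa [hKclosed.closure_eq] at this
  have hxc : x ∈ closure Kᶜ := by
    rw [frontier_eq_closure_inter_closure] at hx
    exact hx.2
  have hKne : K.Nonempty := hint.mono interior_subset
  -- a sequence of exterior points converging to x
  have hexists : ∀ m : ℕ, ∃ z, z ∉ K ∧ dist z x < 1 / (m + 1) ∧ Metric.infDist z K ≤ 1 / ε := by
    intro m
    have h1 : (0:ℝ) < 1 / (m + 1) := by positivity
    have h2' : (0:ℝ) < 1 / ε := by positivity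
    obtain ⟨z, hz, hdz⟩ := Metric.mem_closure_iff.1 hxc _ (lt_min h1 h2')
    refine ⟨z, hz, ?_, ?_⟩
    · rw [dist_comm]; exact hdz.trans_le (min_le_left _ _)
    · refine le_trans (Metric.infDist_le_dist_of_mem hxK) ?_
      rw [dist_comm] at hdz
      exact (hdz.trans_le (min_le_right _ _)).le
  choose z hz1 hz2 hz3 using hexists
  choose C hCK A hCA hzA hrk hdistA hsph using fun m => h2 (z m) (hz1 m) (hz3 m)
  -- orthonormal bases of the directions
  let B : ∀ m, OrthonormalBasis (Fin (k + 1)) ℝ (A m).direction :=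
    fun m => (stdOrthonormalBasis ℝ (A m).direction).reindex (finCongr (hrk m))
  let u : ℕ → Fin (k + 1) → EuclideanSpace ℝ (Fin n) := fun m i => (B m i : EuclideanSpace ℝ (Fin n))
  have hu : ∀ m, Orthonormal ℝ (u m) := by
    intro m
    have h := (B m).orthonormal
    rw [orthonormal_iff_ite] at h ⊢
    intro i j
    rw [show (inner ℝ (u m i) (u m j) : ℝ) = inner ℝ (B m i) (B m j) from
      (Submodule.coe_inner _ _ _).symm]
    exact h i j
  have humem : ∀ m i, u m i ∈ (A m).direction := fun m i => SetLike.coe_mem _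
  -- expansion coefficients of z m - C m
  let b : ℕ → Fin (k + 1) → ℝ := fun m i => (inner ℝ (u m i) (z m - C m) : ℝ)
  have hWm : ∀ m, z m - C m ∈ (A m).direction := by
    intro m
    have := AffineSubspace.vsub_mem_direction (hzA m) (hCA m)
    rwa [vsub_eq_sub] at this
  have hexp : ∀ m, z m - C m = ∑ i, b m i • u m i := by
    intro m
    set w : (A m).direction := ⟨z m - C m, hWm m⟩ with hw
    have hr : ∀ i, (B m).repr w i = b m i := by
      intro i
      rw [(B m).repr_apply_apply, Submodule.coe_inner]
    have hsum := (B m).sum_repr w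
    have : ((∑ i, (B m).repr w i • B m i : (A m).direction) : EuclideanSpace ℝ (Fin n))
        = ∑ i, b m i • u m i := by
      push_cast [hr]
      rfl
    rw [hsum] at this
    exact this
  have hnormzC : ∀ m, ‖z m - C m‖ = 1 / ε := by
    intro m
    rw [← dist_eq_norm]
    exact hdistA m
  have hbbnd : ∀ m i, |b m i| ≤ 1 / ε := by
    intro m i
    calc |b m i| ≤ ‖u m i‖ * ‖z m - C m‖ := abs_real_inner_le_norm _ _
      _ = 1 / ε := by rw [(hu m).1 i, hnormzC m, one_mul]
  -- bound on the centers
  obtain ⟨R, hR⟩ := hcomp.isBounded.subset_closedBall (0 : EuclideanSpace ℝ (Fin n))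
  have hCbnd : ∀ m, ‖C m‖ ≤ 1 / ε + R := by
    intro m
    obtain ⟨zK, hzK, hdK⟩ := hcomp.exists_infDist_eq_dist hKne (C m)
    have h1 : dist (C m) zK ≤ 1 / ε := hdK ▸ hCK m
    have h2 : ‖zK‖ ≤ R := mem_closedBall_zero_iff.1 (hR hzK)
    have hCe : C m = (C m - zK) + zK := by abel
    calc ‖C m‖ = ‖(C m - zK) + zK‖ := by rw [← hCe]
      _ ≤ ‖C m - zK‖ + ‖zK‖ := norm_add_le _ _
      _ ≤ 1 / ε + R := add_le_add (by rwa [← dist_eq_norm]) h2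
  -- compactness: extract a convergent subsequence of (C, u, b)
  let P := EuclideanSpace ℝ (Fin n) × (Fin (k + 1) → EuclideanSpace ℝ (Fin n)) × (Fin (k + 1) → ℝ)
  let G : ℕ → P := fun m => (C m, u m, b m)
  have hεnn : (0:ℝ) ≤ 1 / ε := by positivity
  have hsbnd : IsBounded ((closedBall (0 : EuclideanSpace ℝ (Fin n)) (1 / ε + R)) ×ˢ
      ((closedBall (0 : Fin (k + 1) → EuclideanSpace ℝ (Fin n)) 1) ×ˢ
        (closedBall (0 : Fin (k + 1) → ℝ) (1 / ε)))) :=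
    isBounded_closedBall.prod (isBounded_closedBall.prod isBounded_closedBall)
  have hmem : ∀ m, G m ∈ (closedBall (0 : EuclideanSpace ℝ (Fin n)) (1 / ε + R)) ×ˢ
      ((closedBall (0 : Fin (k + 1) → EuclideanSpace ℝ (Fin n)) 1) ×ˢ
        (closedBall (0 : Fin (k + 1) → ℝ) (1 / ε))) := by
    intro m
    refine ⟨mem_closedBall_zero_iff.2 (hCbnd m), mem_closedBall_zero_iff.2 ?_,
      mem_closedBall_zero_iff.2 ?_⟩
    · exact (pi_norm_le_iff_of_nonneg zero_le_one).2 fun i => by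
        rw [(hu m).1 i]
    · exact (pi_norm_le_iff_of_nonneg hεnn).2 fun i => by
        rw [Real.norm_eq_abs]; exact hbbnd m i
  obtain ⟨L, -, φ, hφ, hconv⟩ := tendsto_subseq_of_bounded hsbnd hmem
  obtain ⟨Cl, ul, bl⟩ := L
  have hClim : Tendsto (fun m => C (φ m)) atTop (𝓝 Cl) :=
    (continuous_fst.tendsto _).comp hconv
  have hulim : ∀ i, Tendsto (fun m => u (φ m) i) atTop (𝓝 (ul i)) := fun i =>
    ((continuous_apply i).tendsto _).comp
      (((continuous_fst.comp continuous_snd).tendsto _).comp hconv)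
  have hblim : ∀ i, Tendsto (fun m => b (φ m) i) atTop (𝓝 (bl i)) := fun i =>
    ((continuous_apply i).tendsto _).comp
      (((continuous_snd.comp continuous_snd).tendsto _).comp hconv)
  -- z converges to x
  have hzx : Tendsto z atTop (𝓝 x) := by
    rw [tendsto_iff_dist_tendsto_zero]
    exact squeeze_zero (fun m => dist_nonneg) (fun m => (hz2 m).le)
      tendsto_one_div_add_atTop_nhds_zero_nat
  have hzφ : Tendsto (fun m => z (φ m)) atTop (𝓝 x) := hzx.comp hφ.tendsto_atTop
  -- the limit family is orthonormal
  have hul : Orthonormal ℝ ul := by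
    rw [orthonormal_iff_ite]
    intro i j
    have h1 : Tendsto (fun m => (inner ℝ (u (φ m) i) (u (φ m) j) : ℝ)) atTop
        (𝓝 (inner ℝ (ul i) (ul j))) := (hulim i).inner (hulim j)
    have h2 : ∀ m, (inner ℝ (u (φ m) i) (u (φ m) j) : ℝ) = if i = j then (1:ℝ) else 0 :=
      fun m => orthonormal_iff_ite.1 (hu (φ m)) i j
    refine tendsto_nhds_unique h1 ?_
    simp only [h2]
    exact tendsto_const_nhds
  -- limit distance
  have hdl : dist x Cl = 1 / ε := by
    have h1 : Tendsto (fun m => dist (z (φ m)) (C (φ m))) atTop (𝓝 (dist x Cl)) :=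
      hzφ.dist hClim
    have he : (fun m => dist (z (φ m)) (C (φ m))) = fun _ => 1 / ε := by
      funext m; exact hdistA (φ m)
    rw [he] at h1
    exact tendsto_nhds_unique h1 tendsto_const_nhds
  -- limit expansion
  have hxexp : x - Cl = ∑ i, bl i • ul i := by
    have h1 : Tendsto (fun m => z (φ m) - C (φ m)) atTop (𝓝 (x - Cl)) := hzφ.sub hClim
    have h2 : Tendsto (fun m => ∑ i, b (φ m) i • u (φ m) i) atTop
        (𝓝 (∑ i, bl i • ul i)) :=
      tendsto_finset_sum _ fun i _ => (hblim i).smul (hulim i)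
    exact tendsto_nhds_unique (h1.congr fun m => hexp (φ m)) h2
  -- the limit sphere
  set W : Submodule ℝ (EuclideanSpace ℝ (Fin n)) := Submodule.span ℝ (Set.range ul) with hW
  refine ⟨Cl, AffineSubspace.mk' Cl W, AffineSubspace.self_mem_mk' _ _, ?_, ?_, hdl, ?_⟩
  · rw [AffineSubspace.mem_mk', vsub_eq_sub, hxexp]
    exact Submodule.sum_mem _ fun i _ =>
      Submodule.smul_mem _ _ (Submodule.subset_span (Set.mem_range_self i))
  · rw [AffineSubspace.direction_mk']
    rw [hW, finrank_span_eq_card hul.linearIndependent, Fintype.card_fin]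
  · intro y hy hyd hyint
    have hyW : y - Cl ∈ W := by
      have := AffineSubspace.vsub_mem_direction hy (AffineSubspace.self_mem_mk' Cl W)
      rwa [AffineSubspace.direction_mk', vsub_eq_sub] at this
    obtain ⟨a, ha⟩ := mem_span_range_iff_exists_fun ℝ |>.1 hyW
    -- approximating points on the spheres
    set y' : ℕ → EuclideanSpace ℝ (Fin n) := fun m => C (φ m) + ∑ i, a i • u (φ m) i with hy'
    have hy'A : ∀ m, y' m ∈ A (φ m) := by
      intro m
      have hd : (∑ i, a i • u (φ m) i) ∈ (A (φ m)).direction :=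
        Submodule.sum_mem _ fun i _ => Submodule.smul_mem _ _ (humem (φ m) i)
      have := AffineSubspace.vadd_mem_of_mem_direction hd (hCA (φ m))
      simpa [hy', vadd_eq_add, add_comm] using this
    have hy'dist : ∀ m, dist (y' m) (C (φ m)) = 1 / ε := by
      intro m
      rw [dist_eq_norm]
      have h1 : y' m - C (φ m) = ∑ i, a i • u (φ m) i := by
        simp [hy']
      rw [h1, aux_norm_sum_eq (hu (φ m)) hul a, ha, ← dist_eq_norm, hyd]
    have hy'nK : ∀ m, y' m ∉ K := fun m => hsph (φ m) (y' m) (hy'A m) (hy'dist m)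
    have hy'conv : Tendsto y' atTop (𝓝 y) := by
      have h2 : Tendsto (fun m => ∑ i, a i • u (φ m) i) atTop (𝓝 (∑ i, a i • ul i)) :=
        tendsto_finset_sum _ fun i _ => (hulim i).const_smul (a i)
      have := hClim.add h2
      rw [ha] at this
      simpa using this
    have hmem : interior K ∈ 𝓝 y := isOpen_interior.mem_nhds hyint
    obtain ⟨m, hm⟩ := (hy'conv.eventually_mem hmem).exists
    exact hy'nK m (interior_subset hm)
end

section
/- Let V₁ and V₂ be compact bodies in E^n (n > 2) of class K^k_2 with n − k > 1. If the orthogonal projections of V₁ and V₂ onto every (n−k)-dimensional linear subspace coincide, then V₁ = V₂. -/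
/-- Two compact bodies of class `K^k_2` in `E^n` (`n > 2`, `n - k > 1`) with equal
orthogonal projections onto every `(n-k)`-dimensional subspace are equal. -/
theorem stmt_13 (n k : ℕ) (hn : 2 < n) (hnk : 1 < n - k)
    (V₁ V₂ : Set (EuclideanSpace ℝ (Fin n)))
    (hcomp₁ : IsCompact V₁) (hbody₁ : V₁ = closure (interior V₁))
    (hint₁ : (interior V₁).Nonempty)
    (hcomp₂ : IsCompact V₂) (hbody₂ : V₂ = closure (interior V₂))
    (hint₂ : (interior V₂).Nonempty)
    (h₁ : ∀ x ∉ V₁, ∃ P : AffineSubspace ℝ (EuclideanSpace ℝ (Fin n)), x ∈ P ∧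
      Module.finrank ℝ P.direction = k ∧ ∀ y ∈ P, y ∉ V₁)
    (h₂ : ∀ x ∉ V₂, ∃ P : AffineSubspace ℝ (EuclideanSpace ℝ (Fin n)), x ∈ P ∧
      Module.finrank ℝ P.direction = k ∧ ∀ y ∈ P, y ∉ V₂)
    (hproj : ∀ P : Submodule ℝ (EuclideanSpace ℝ (Fin n)), Module.finrank ℝ P = n - k →
      (fun y => (P.orthogonalProjectionOnto y : EuclideanSpace ℝ (Fin n))) '' V₁ =
        (fun y => (P.orthogonalProjectionOnto y : EuclideanSpace ℝ (Fin n))) '' V₂) :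
    V₁ = V₂ := by
  have key : ∀ (A B : Set (EuclideanSpace ℝ (Fin n))),
      (∀ x ∉ B, ∃ P : AffineSubspace ℝ (EuclideanSpace ℝ (Fin n)), x ∈ P ∧
        Module.finrank ℝ P.direction = k ∧ ∀ y ∈ P, y ∉ B) →
      (∀ P : Submodule ℝ (EuclideanSpace ℝ (Fin n)), Module.finrank ℝ P = n - k →
        (fun y => (Submodule.orthogonalProjectionOnto P y : EuclideanSpace ℝ (Fin n))) '' A =
          (fun y => (Submodule.orthogonalProjectionOnto P y : EuclideanSpace ℝ (Fin n))) '' B) →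
      A ⊆ B := by
    intro A B hB hAB x hxA
    by_contra hxB
    obtain ⟨P, hxP, hdim, hdisj⟩ := hB x hxB
    set D := P.direction with hD
    have hdimW : Module.finrank ℝ Dᗮ = n - k := by
      have h1 := Submodule.finrank_add_finrank_orthogonal (K := D)
      rw [hdim, finrank_euclideanSpace_fin] at h1
      omega
    have himg := hAB Dᗮ hdimW
    have hx : (Submodule.orthogonalProjectionOnto Dᗮ x : EuclideanSpace ℝ (Fin n)) ∈
        (fun y => (Submodule.orthogonalProjectionOnto Dᗮ y : EuclideanSpace ℝ (Fin n))) '' A := ⟨x, hxA, rfl⟩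
    rw [himg] at hx
    obtain ⟨y, hyB, hyx⟩ := hx
    have hmem : y - x ∈ D := by
      have heq : Submodule.orthogonalProjectionOnto Dᗮ y = Submodule.orthogonalProjectionOnto Dᗮ x :=
        Subtype.coe_injective hyx
      have hz : Submodule.orthogonalProjectionOnto Dᗮ (y - x) = 0 := by
        rw [map_sub, heq, sub_self]
      have : y - x ∈ Dᗮᗮ := by
        rwa [Submodule.orthogonalProjectionOnto_eq_zero_iff] at hz
      rwa [Submodule.orthogonal_orthogonal] at this
    have hyP : y ∈ P := by
      have := AffineSubspace.vadd_mem_of_mem_direction hmem hxP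
      simpa using this
    exact hdisj y hyP hyB
  exact Set.Subset.antisymm (key V₁ V₂ h₂ hproj)
    (key V₂ V₁ h₁ fun P hP => (hproj P hP).symm)
end

section
/- Small bodies of class K^{k,ε}_2 equal their ε-visual hull: let K be a compact body in E^n with diam K < 1/ε and suppose every point x ∉ K with dist(x, K) ≤ 1/ε lies on a k-sphere S^k(C, 1/ε) (with dist(C, K) ≤ 1/ε) disjoint from K. Then for every x ∉ K there exists a center C with dist(C,K) ≤ 1/ε and a k-sphere of radius 1/ε through x centered at C disjoint from K; consequently x does not belong to the ε-visual hull of K and the ε-visual hull of K equals K. -/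
open Metric Module

lemma aux_superset_finrank {V : Type*} [AddCommGroup V] [Module ℝ V] [FiniteDimensional ℝ V]
    (d : ℕ) : ∀ (W : Submodule ℝ V), Module.finrank ℝ W + d ≤ Module.finrank ℝ V →
    ∃ W' : Submodule ℝ V, W ≤ W' ∧ Module.finrank ℝ W' = Module.finrank ℝ W + d := by
  induction d with
  | zero => exact fun W _ => ⟨W, le_rfl, rfl⟩
  | succ d ih =>
    intro W hW
    have hlt : Module.finrank ℝ W < Module.finrank ℝ V := by omega
    obtain ⟨v, hv⟩ := W.exists_of_finrank_lt hlt
    have hvW : v ∉ W := by simpa using hv 1 one_ne_zero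
    have hv0 : v ≠ 0 := fun h => hvW (h ▸ W.zero_mem)
    have hfin : Module.finrank ℝ ↥(W ⊔ Submodule.span ℝ {v}) = Module.finrank ℝ W + 1 := by
      have hinf : W ⊓ Submodule.span ℝ {v} = ⊥ := by
        rw [eq_bot_iff]
        intro x hx
        obtain ⟨hxW, hxs⟩ := Submodule.mem_inf.mp hx
        obtain ⟨c, rfl⟩ := Submodule.mem_span_singleton.mp hxs
        rcases eq_or_ne c 0 with rfl | hc
        · simp
        · exact absurd hxW (hv c hc)
      have h := Submodule.finrank_sup_add_finrank_inf_eq W (Submodule.span ℝ {v})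
      rw [hinf] at h
      simp only [finrank_bot, add_zero, finrank_span_singleton hv0] at h
      omega
    obtain ⟨W', hle, hrk⟩ := ih (W ⊔ Submodule.span ℝ {v}) (by rw [hfin]; omega)
    exact ⟨W', le_sup_left.trans hle, by rw [hrk, hfin]; omega⟩

/-- Small bodies of class `K^{k,ε}_2` equal their `ε`-visual hull: if `diam K < 1/ε` and
every exterior point at distance at most `1/ε` from `K` lies on a `k`-sphere of radius
`1/ε` (centered at an admissible center) disjoint from `K`, then every exterior point lies
on an admissible `k`-sphere fiber disjoint from `K`, and the `ε`-visual hull of `K`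
(the set of points all of whose admissible `k`-sphere fibers meet `K`) equals `K`. -/
theorem stmt_17 (n k : ℕ) (ε : ℝ) (hε : 0 < ε) (K : Set (EuclideanSpace ℝ (Fin n)))
    (hcomp : IsCompact K) (hbody : K = closure (interior K)) (hint : (interior K).Nonempty)
    (hdiam : Metric.diam K < 1 / ε)
    (h2 : ∀ x ∉ K, Metric.infDist x K ≤ 1 / ε →
      ∃ C : EuclideanSpace ℝ (Fin n), Metric.infDist C K ≤ 1 / ε ∧
        ∃ A : AffineSubspace ℝ (EuclideanSpace ℝ (Fin n)),
          C ∈ A ∧ x ∈ A ∧ Module.finrank ℝ A.direction = k + 1 ∧ dist x C = 1 / ε ∧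
          ∀ y ∈ A, dist y C = 1 / ε → y ∉ K) :
    (∀ x ∉ K,
      ∃ C : EuclideanSpace ℝ (Fin n), Metric.infDist C K ≤ 1 / ε ∧
        ∃ A : AffineSubspace ℝ (EuclideanSpace ℝ (Fin n)),
          C ∈ A ∧ x ∈ A ∧ Module.finrank ℝ A.direction = k + 1 ∧
          ∀ y ∈ A, dist y C = dist x C → y ∉ K) ∧
    {x : EuclideanSpace ℝ (Fin n) |
      ∀ C : EuclideanSpace ℝ (Fin n), Metric.infDist C K ≤ 1 / ε →
        ∀ A : AffineSubspace ℝ (EuclideanSpace ℝ (Fin n)),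
          C ∈ A → x ∈ A → Module.finrank ℝ A.direction = k + 1 →
          ∃ y ∈ A, dist y C = dist x C ∧ y ∈ K} = K := by
  have hεpos : 0 < 1 / ε := by positivity
  have hKne : K.Nonempty := hint.mono interior_subset
  have hKclosed : IsClosed K := hcomp.isClosed
  have part1 : ∀ x ∉ K,
      ∃ C : EuclideanSpace ℝ (Fin n), Metric.infDist C K ≤ 1 / ε ∧
        ∃ A : AffineSubspace ℝ (EuclideanSpace ℝ (Fin n)),
          C ∈ A ∧ x ∈ A ∧ Module.finrank ℝ A.direction = k + 1 ∧
          ∀ y ∈ A, dist y C = dist x C → y ∉ K := by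
    intro x hx
    by_cases hle : Metric.infDist x K ≤ 1 / ε
    · obtain ⟨C, hC, A, hCA, hxA, hrk, hd, hsph⟩ := h2 x hx hle
      exact ⟨C, hC, A, hCA, hxA, hrk, fun y hy hyd => hsph y hy (hyd.trans hd)⟩
    · push_neg at hle
      obtain ⟨p0, hp0⟩ := hKne
      -- first derive k + 1 ≤ n using an exterior point at distance exactly 1/ε
      have hkn : k + 1 ≤ n := by
        set g : ℝ → ℝ := fun t => Metric.infDist (p0 + t • (x - p0)) K with hg
        have hcont : ContinuousOn g (Set.Icc 0 1) := by
          apply Continuous.continuousOn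
          exact (Metric.continuous_infDist_pt K).comp
            (continuous_const.add (continuous_id.smul continuous_const))
        have hg0 : g 0 = 0 := by
          simp [hg, Metric.infDist_zero_of_mem hp0]
        have hg1 : g 1 = Metric.infDist x K := by simp [hg]
        have hmem : (1 / ε) ∈ Set.Icc (g 0) (g 1) := by
          rw [hg0, hg1]; exact ⟨le_of_lt hεpos, le_of_lt hle⟩
        obtain ⟨t, _, hgt⟩ := intermediate_value_Icc zero_le_one hcont hmem
        set z := p0 + t • (x - p0) with hz
        have hzK : z ∉ K := by
          intro hzK
          rw [show g t = Metric.infDist z K from rfl, Metric.infDist_zero_of_mem hzK] at hgt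
          exact absurd hgt.symm (ne_of_gt hεpos)
        obtain ⟨C, _, A, _, _, hrk, _, _⟩ := h2 z hzK (le_of_eq hgt)
        calc k + 1 = Module.finrank ℝ A.direction := hrk.symm
          _ ≤ Module.finrank ℝ (EuclideanSpace ℝ (Fin n)) := Submodule.finrank_le _
          _ = n := finrank_euclideanSpace_fin
      have hxp0 : x - p0 ≠ 0 := sub_ne_zero.mpr (fun h => hx (h ▸ hp0))
      set W0 : Submodule ℝ (EuclideanSpace ℝ (Fin n)) := Submodule.span ℝ {x - p0} with hW0
      have hW0rk : Module.finrank ℝ W0 = 1 := finrank_span_singleton hxp0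
      obtain ⟨W, hW0le, hWrk⟩ := aux_superset_finrank k W0
        (by rw [hW0rk, finrank_euclideanSpace_fin]; omega)
      refine ⟨p0, by rw [Metric.infDist_zero_of_mem hp0]; exact le_of_lt hεpos,
        AffineSubspace.mk' p0 W, AffineSubspace.self_mem_mk' p0 W, ?_, ?_, ?_⟩
      · rw [AffineSubspace.mem_mk']
        exact hW0le (Submodule.mem_span_singleton_self _)
      · rw [AffineSubspace.direction_mk', hWrk, hW0rk]; omega
      · intro y _ hyd hyK
        have h1 : dist y p0 ≤ Metric.diam K := Metric.dist_le_diam_of_mem hcomp.isBounded hyK hp0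
        have h2 : Metric.infDist x K ≤ dist x p0 := Metric.infDist_le_dist_of_mem hp0
        rw [hyd] at h1
        linarith
  refine ⟨part1, ?_⟩
  ext x
  simp only [Set.mem_setOf_eq]
  constructor
  · intro hx
    by_contra hxK
    obtain ⟨C, hC, A, hCA, hxA, hrk, hsph⟩ := part1 x hxK
    obtain ⟨y, hyA, hyd, hyK⟩ := hx C hC A hCA hxA hrk
    exact hsph y hyA hyd hyK
  · intro hxK C _ A _ hxA _
    exact ⟨x, hxA, rfl, hxK⟩
end
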